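/- For every integer r ≥ 1, every n ≥ r+1, and every real y with -r^r/(r+1)^{r+1} ≤ y < 0, one has Z_{n+1}(y) < (1+y)·Z_n(y). -/

import Mathlib

open Polynomial

/-- The partition function of the 1d classical Rydberg blockade chain with `n` sites and
blockade radius `r`:  `Z_n(y) = Σ_{m=0}^{⌊(n+r)/(r+1)⌋} C(n - r(m-1), m) y^m`. -/
noncomputable def Z (r n : ℕ) : Polynomial ℝ :=
  ∑ m ∈ Finset.range ((n + r) / (r + 1) + 1),
    Polynomial.C ((Nat.choose (n - r * (m - 1)) m : ℝ)) * Polynomial.X ^ m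

/-- The evaluation of `Z r n` can be written as a sum over any sufficiently large range,
since the binomial coefficients vanish beyond the natural cutoff. -/
lemma Z_eval (r n N : ℕ) (hN : (n + r) / (r + 1) + 1 ≤ N) (y : ℝ) :
    (Z r n).eval y = ∑ m ∈ Finset.range N, ((n - r * (m - 1)).choose m : ℝ) * y ^ m := by
  rw [Z]
  rw [eval_finset_sum]
  simp only [eval_mul, eval_C, eval_pow, eval_X]
  refine Finset.sum_subset (Finset.range_subset_range.2 hN) ?_
  intro m hm hm'
  simp only [Finset.mem_range, not_lt] at hm hm'
  have hm1 : 1 ≤ m := le_trans (Nat.le_add_left 1 _) hm'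
  have h1 : (n + r) / (r + 1) < m := by omega
  have h2 : n + r < m * (r + 1) := (Nat.div_lt_iff_lt_mul (by omega)).1 h1
  have h4 : r * (m - 1) + r = r * m := by
    obtain ⟨k, hk⟩ : ∃ k, m = k + 1 := ⟨m - 1, by omega⟩
    subst hk
    simp [Nat.mul_succ]
  have h5 : m * (r + 1) = r * m + m := by ring
  have h3 : n - r * (m - 1) < m := by omega
  rw [Nat.choose_eq_zero_of_lt h3]
  simp

/-- Pascal-type identity for the coefficients, valid with truncated subtraction. -/
lemma Z_pascal (r n m : ℕ) :
    (n + 1 - r * m).choose (m + 1)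
      = (n - r * m).choose (m + 1) + ((n - r) - r * (m - 1)).choose m := by
  cases m with
  | zero => simp [Nat.choose_one_right]
  | succ j =>
    have h0 : (n - r) - r * (j + 1 - 1) = n - r * (j + 1) := by
      rw [Nat.sub_sub, Nat.add_sub_cancel,
        show r + r * j = r * (j + 1) from by ring]
    rw [h0]
    by_cases h : r * (j + 1) ≤ n
    · rw [Nat.succ_sub h, ← Nat.succ_eq_add_one (j + 1), Nat.choose_succ_succ]
      omega
    · rw [show n + 1 - r * (j + 1) = 0 from by omega,
         show n - r * (j + 1) = 0 from by omega]
      simp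

/-- The basic recurrence `Z_{n+1}(y) = Z_n(y) + y Z_{n-r}(y)` (with truncated subtraction). -/
lemma Z_recurrence (r n : ℕ) (y : ℝ) :
    (Z r (n + 1)).eval y = (Z r n).eval y + y * (Z r (n - r)).eval y := by
  set N := (n + 1 + r) / (r + 1) + 1 with hNdef
  have hmono1 : (n + r) / (r + 1) + 1 ≤ N + 1 := by
    have := Nat.div_le_div_right (c := r + 1) (show n + r ≤ n + 1 + r by omega)
    omega
  have hmono2 : (n - r + r) / (r + 1) + 1 ≤ N := by
    have := Nat.div_le_div_right (c := r + 1) (show n - r + r ≤ n + 1 + r by omega)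
    omega
  rw [Z_eval r (n + 1) (N + 1) (by omega), Z_eval r n (N + 1) hmono1,
    Z_eval r (n - r) N hmono2]
  rw [Finset.sum_range_succ', Finset.sum_range_succ' _ N]
  have h0 : ∀ k : ℕ, ((k - r * (0 - 1)).choose 0 : ℝ) * y ^ 0 = 1 := by
    intro k; simp
  rw [h0, h0]
  have key : ∀ m, ((n + 1 - r * (m + 1 - 1)).choose (m + 1) : ℝ) * y ^ (m + 1)
      = ((n - r * (m + 1 - 1)).choose (m + 1) : ℝ) * y ^ (m + 1)
        + y * (((n - r - r * (m - 1)).choose m : ℝ) * y ^ m) := by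
    intro m
    have hp := Z_pascal r n m
    rw [Nat.add_sub_cancel]
    rw [hp]
    push_cast
    ring
  rw [Finset.sum_congr rfl (fun m _ => key m)]
  rw [Finset.sum_add_distrib, Finset.mul_sum]
  ring

lemma Z_zero_eval (r : ℕ) (y : ℝ) : (Z r 0).eval y = 1 := by
  have h1 : (0 + r) / (r + 1) = 0 := Nat.div_eq_of_lt (by omega)
  rw [Z, h1]
  simp

/-- Positivity and the lower ratio bound `Z_{n+1} ≥ (r/(r+1)) Z_n` on the blockade interval. -/
lemma Z_pos_ratio (r : ℕ) (hr : 1 ≤ r) (y : ℝ)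
    (hy0 : -(r : ℝ) ^ r / ((r : ℝ) + 1) ^ (r + 1) ≤ y) (hy1 : y < 0) (n : ℕ) :
    0 < (Z r n).eval y ∧
      ((r : ℝ) / ((r : ℝ) + 1)) * (Z r n).eval y ≤ (Z r (n + 1)).eval y := by
  set a : ℕ → ℝ := fun k => (Z r k).eval y with ha
  set R : ℝ := (r : ℝ) with hRdef
  set c : ℝ := R / (R + 1) with hcdef
  have hR1 : (1 : ℝ) ≤ R := by rw [hRdef]; exact_mod_cast hr
  have hRpos : (0 : ℝ) < R + 1 := by linarith
  have hc0 : 0 < c := div_pos (by linarith) hRpos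
  have hc1 : c < 1 := (div_lt_one hRpos).2 (by linarith)
  have ha0 : a 0 = 1 := Z_zero_eval r y
  set d : ℝ := c ^ r with hddef
  have hd0 : 0 < d := pow_pos hc0 r
  have hd1 : d ≤ 1 := pow_le_one₀ hc0.le hc1.le
  have hy2 : -(d / (R + 1)) ≤ y := by
    have hdr : d / (R + 1) = R ^ r / (R + 1) ^ (r + 1) := by
      rw [hddef, hcdef, div_pow, div_div, ← pow_succ]
    rw [hdr]
    rw [neg_div] at hy0
    exact hy0
  induction n using Nat.strong_induction_on with
  | _ n ih =>
    have hpos : 0 < a n := by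
      cases n with
      | zero => rw [ha0]; norm_num
      | succ k =>
        have hk := ih k (Nat.lt_succ_self k)
        have := mul_pos hc0 hk.1
        linarith [hk.2]
    refine ⟨hpos, ?_⟩
    have chain : ∀ j : ℕ, c ^ j * a (n - j) ≤ a n := by
      intro j
      induction j with
      | zero => simp
      | succ i hi =>
        by_cases hni : i < n
        · have hstep := ih (n - i - 1) (by omega)
          have h2 : n - i - 1 + 1 = n - i := by omega
          rw [h2] at hstep
          have h3 : n - (i + 1) = n - i - 1 := by omega
          rw [h3]
          calc c ^ (i + 1) * a (n - i - 1) = c ^ i * (c * a (n - i - 1)) := by ring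
            _ ≤ c ^ i * a (n - i) :=
              mul_le_mul_of_nonneg_left hstep.2 (pow_nonneg hc0.le i)
            _ ≤ a n := hi
        · have h3 : n - (i + 1) = 0 := by omega
          have h4 : n - i = 0 := by omega
          rw [h3, ha0]
          rw [h4, ha0] at hi
          have : c ^ (i + 1) ≤ c ^ i := pow_le_pow_of_le_one hc0.le hc1.le (by omega)
          linarith
    have hchr := chain r
    have hposnr : 0 < a (n - r) := by
      cases n with
      | zero => simp [ha0]
      | succ k =>
        exact (ih (k + 1 - r) (by omega)).1
    have hrec : a (n + 1) = a n + y * a (n - r) := Z_recurrence r n y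
    show c * a n ≤ a (n + 1)
    rw [hrec]
    have e1 : y * a n ≤ y * (d * a (n - r)) :=
      mul_le_mul_of_nonpos_left hchr hy1.le
    have e3 : (-(d / (R + 1))) * a n ≤ y * a n :=
      mul_le_mul_of_nonneg_right hy2 hpos.le
    have e4 : d * (y * a (n - r)) ≥ d * ((-(1 / (R + 1))) * a n) := by
      have : (-(d / (R + 1))) * a n = d * ((-(1 / (R + 1))) * a n) := by
        field_simp
      nlinarith [e1, e3]
    have e5 : y * a (n - r) ≥ (-(1 / (R + 1))) * a n :=
      le_of_mul_le_mul_left e4 hd0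
    have hceq : c = 1 - 1 / (R + 1) := by
      rw [hcdef]; field_simp; ring
    rw [hceq]
    linarith [e5]


/-- For every integer `r ≥ 1`, every `n ≥ r+1`, and every real `y` with
`-r^r/(r+1)^{r+1} ≤ y < 0`, one has `Z_{n+1}(y) < (1+y)·Z_n(y)`. -/
theorem Z_ratio_upper_bound (r n : ℕ) (hr : 1 ≤ r) (hn : r + 1 ≤ n) (y : ℝ)
    (hy0 : -(r : ℝ) ^ r / ((r : ℝ) + 1) ^ (r + 1) ≤ y) (hy1 : y < 0) :
    (Z r (n + 1)).eval y < (1 + y) * (Z r n).eval y := by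
  set a : ℕ → ℝ := fun k => (Z r k).eval y with ha
  have hdec : ∀ k : ℕ, a (k + 1) < a k := by
    intro k
    have hrec : a (k + 1) = a k + y * a (k - r) := Z_recurrence r k y
    have hpos : 0 < a (k - r) := (Z_pos_ratio r hr y hy0 hy1 (k - r)).1
    have : y * a (k - r) < 0 := mul_neg_of_neg_of_pos hy1 hpos
    linarith
  have hanti : StrictAnti a := strictAnti_nat_of_succ_lt hdec
  have hmono : a n < a (n - r) := hanti (by omega)
  have hrec : a (n + 1) = a n + y * a (n - r) := Z_recurrence r n y
  show a (n + 1) < (1 + y) * a n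
  rw [hrec]
  have : y * a (n - r) < y * a n := mul_lt_mul_of_neg_left hmono hy1
  nlinarith [this]
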